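/- Let L = (L_1,…,L_K) ∈ ℕ^K with L_k ≥ 1 and d ≤ Σ_{k=1}^K L_k, and let w_1,…,w_K > 0 be weights. If W ∈ S_K(L) is a local minimizer of the fusion frame potential FFP_w on S_K(L) and (W, w) ∈ ℰ, then (W, w) is a fusion frame for 𝔽^d, i.e. W_1 + W_2 + … + W_K = 𝔽^d (equivalently, the fusion frame operator S = Σ_k w_k² π_{W_k} is invertible). -/

import Mathlib

open scoped BigOperators

/-- The orthogonal projection onto a subspace `W` of `𝔽^d`, as an endomorphism. -/
noncomputable def projL {𝕜 : Type*} [RCLike 𝕜] {d : ℕ}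
    (W : Submodule 𝕜 (EuclideanSpace 𝕜 (Fin d))) :
    EuclideanSpace 𝕜 (Fin d) →ₗ[𝕜] EuclideanSpace 𝕜 (Fin d) :=
  W.subtype ∘ₗ (W.orthogonalProjectionOnto).toLinearMap

/-- The fusion frame operator `S = Σ w_k² π_{W_k}`. -/
noncomputable def fusionOp {𝕜 : Type*} [RCLike 𝕜] {d K : ℕ}
    (w : Fin K → ℝ) (W : Fin K → Submodule 𝕜 (EuclideanSpace 𝕜 (Fin d))) :
    EuclideanSpace 𝕜 (Fin d) →ₗ[𝕜] EuclideanSpace 𝕜 (Fin d) :=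
  ∑ k, ((w k : 𝕜) ^ 2) • projL (W k)

/-- The fusion frame potential `FFP_w(W) = tr(S²)`. -/
noncomputable def FFP {𝕜 : Type*} [RCLike 𝕜] {d K : ℕ}
    (w : Fin K → ℝ) (W : Fin K → Submodule 𝕜 (EuclideanSpace 𝕜 (Fin d))) : ℝ :=
  RCLike.re (LinearMap.trace 𝕜 (EuclideanSpace 𝕜 (Fin d)) (fusionOp w W ∘ₗ fusionOp w W))

/-- The squared Frobenius norm `‖T‖_F² = tr(T* T)` of an endomorphism of `𝔽^d`. -/
noncomputable def frobSq {𝕜 : Type*} [RCLike 𝕜] {d : ℕ}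
    (T : EuclideanSpace 𝕜 (Fin d) →ₗ[𝕜] EuclideanSpace 𝕜 (Fin d)) : ℝ :=
  RCLike.re (LinearMap.trace 𝕜 (EuclideanSpace 𝕜 (Fin d)) (LinearMap.adjoint T ∘ₗ T))

/-- `W` is a local minimizer of `FFP_w` on `S_K(L)`: it has the prescribed
dimensions and minimizes the potential among all tuples with the same dimensions
within some Frobenius distance `ε`. -/
def IsLocalMinFFP {𝕜 : Type*} [RCLike 𝕜] {d K : ℕ}
    (w : Fin K → ℝ) (L : Fin K → ℕ)
    (W : Fin K → Submodule 𝕜 (EuclideanSpace 𝕜 (Fin d))) : Prop :=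
  (∀ k, Module.finrank 𝕜 (W k) = L k) ∧
  ∃ ε > (0 : ℝ), ∀ V : Fin K → Submodule 𝕜 (EuclideanSpace 𝕜 (Fin d)),
    (∀ k, Module.finrank 𝕜 (V k) = L k) →
    (∑ k, frobSq (projL (W k) - projL (V k))) < ε ^ 2 →
    FFP w W ≤ FFP w V

/-- `(W, w) ∈ ℰ`: every projection `π_{W_k}` is an eigenoperator of `S`. -/
def MemE {𝕜 : Type*} [RCLike 𝕜] {d K : ℕ}
    (w : Fin K → ℝ) (W : Fin K → Submodule 𝕜 (EuclideanSpace 𝕜 (Fin d))) : Prop :=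
  ∀ k, ∃ μ : ℝ, Module.End.HasEigenvalue (fusionOp w W) (μ : 𝕜) ∧
    fusionOp w W ∘ₗ projL (W k) = (μ : 𝕜) • projL (W k)



section Aux
open scoped InnerProductSpace
open Module Submodule

variable {𝕜 : Type*} [RCLike 𝕜] {d : ℕ}

lemma projL_mem (W : Submodule 𝕜 (EuclideanSpace 𝕜 (Fin d))) (y : EuclideanSpace 𝕜 (Fin d)) :
    projL W y ∈ W := (orthogonalProjection W y).2

lemma projL_of_mem {W : Submodule 𝕜 (EuclideanSpace 𝕜 (Fin d))} {y : EuclideanSpace 𝕜 (Fin d)}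
    (h : y ∈ W) : projL W y = y := starProjection_eq_self_iff.2 h

lemma inner_sub_projL (W : Submodule 𝕜 (EuclideanSpace 𝕜 (Fin d))) (y : EuclideanSpace 𝕜 (Fin d))
    {z : EuclideanSpace 𝕜 (Fin d)} (hz : z ∈ W) : ⟪y - projL W y, z⟫_𝕜 = 0 :=
  starProjection_inner_eq_zero y z hz

lemma projL_of_orthogonal {W : Submodule 𝕜 (EuclideanSpace 𝕜 (Fin d))}
    {y : EuclideanSpace 𝕜 (Fin d)} (h : y ∈ Wᗮ) : projL W y = 0 := by
  show ((W.orthogonalProjectionOnto y : W) : EuclideanSpace 𝕜 (Fin d)) = 0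
  rw [orthogonalProjectionOnto_apply_of_mem_orthogonal h]; rfl

/-- rank one operator `y ↦ ⟪u, y⟫ • u`. -/
noncomputable def rk1 (u : EuclideanSpace 𝕜 (Fin d)) :
    EuclideanSpace 𝕜 (Fin d) →ₗ[𝕜] EuclideanSpace 𝕜 (Fin d) :=
  LinearMap.toSpanSingleton 𝕜 _ u ∘ₗ (innerSL 𝕜 u).toLinearMap

@[simp] lemma rk1_apply (u y : EuclideanSpace 𝕜 (Fin d)) : rk1 u y = ⟪u, y⟫_𝕜 • u := rfl

lemma trace_end_field (f : 𝕜 →ₗ[𝕜] 𝕜) : LinearMap.trace 𝕜 𝕜 f = f 1 := by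
  have : f = f 1 • LinearMap.id := by
    ext c; simp [smul_eq_mul, mul_comm]
  rw [this, map_smul, LinearMap.trace_id]
  simp

lemma trace_comp_rk1 (T : EuclideanSpace 𝕜 (Fin d) →ₗ[𝕜] EuclideanSpace 𝕜 (Fin d))
    (u : EuclideanSpace 𝕜 (Fin d)) :
    LinearMap.trace 𝕜 _ (T ∘ₗ rk1 u) = ⟪u, T u⟫_𝕜 := by
  have : T ∘ₗ rk1 u = (T ∘ₗ LinearMap.toSpanSingleton 𝕜 _ u) ∘ₗ (innerSL 𝕜 u).toLinearMap := by
    rw [rk1, LinearMap.comp_assoc]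
  rw [this, LinearMap.trace_comp_comm', trace_end_field]
  simp [LinearMap.toSpanSingleton]

lemma trace_rk1_comp_rk1 (a b : EuclideanSpace 𝕜 (Fin d)) :
    LinearMap.trace 𝕜 _ (rk1 a ∘ₗ rk1 b) = ⟪a, b⟫_𝕜 * ⟪b, a⟫_𝕜 := by
  rw [trace_comp_rk1, rk1_apply, inner_smul_right]

lemma rk1_adjoint (u : EuclideanSpace 𝕜 (Fin d)) : LinearMap.adjoint (rk1 u) = rk1 u := by
  symm
  rw [LinearMap.eq_adjoint_iff]
  intro x y
  simp only [rk1_apply, inner_smul_left, inner_smul_right, inner_conj_symm]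
  ring

lemma projL_sup_span {W' : Submodule 𝕜 (EuclideanSpace 𝕜 (Fin d))} {a : EuclideanSpace 𝕜 (Fin d)}
    (ha : ⟪a, a⟫_𝕜 = 1) (horth : ∀ z ∈ W', ⟪a, z⟫_𝕜 = 0) :
    projL (W' ⊔ (𝕜 ∙ a)) = projL W' + rk1 a := by
  refine LinearMap.ext fun y => ?_
  show (orthogonalProjection (W' ⊔ (𝕜 ∙ a)) y : EuclideanSpace 𝕜 (Fin d))
      = (orthogonalProjection W' y : EuclideanSpace 𝕜 (Fin d)) + ⟪a, y⟫_𝕜 • a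
  have hmem : (orthogonalProjection W' y : EuclideanSpace 𝕜 (Fin d)) + ⟪a, y⟫_𝕜 • a
      ∈ W' ⊔ (𝕜 ∙ a) :=
    Submodule.add_mem_sup (orthogonalProjection W' y).2
      (Submodule.smul_mem _ _ (Submodule.mem_span_singleton_self a))
  refine (eq_starProjection_of_mem_of_inner_eq_zero hmem ?_)
  intro z hz
  rcases Submodule.mem_sup.1 hz with ⟨z1, hz1, z2, hz2, rfl⟩
  rcases Submodule.mem_span_singleton.1 hz2 with ⟨c, rfl⟩
  have hπ : ⟪y - (orthogonalProjection W' y : EuclideanSpace 𝕜 (Fin d)), z1⟫_𝕜 = 0 :=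
    starProjection_inner_eq_zero y z1 hz1
  have haz1 : ⟪a, z1⟫_𝕜 = 0 := horth z1 hz1
  have haπ : ⟪a, (orthogonalProjection W' y : EuclideanSpace 𝕜 (Fin d))⟫_𝕜 = 0 :=
    horth _ (orthogonalProjection W' y).2
  have h1 : ⟪(⟪a, y⟫_𝕜 • a), z1⟫_𝕜 = 0 := by
    rw [inner_smul_left]
    simp [haz1]
  have h2 : ⟪y - ((orthogonalProjection W' y : EuclideanSpace 𝕜 (Fin d)) + ⟪a, y⟫_𝕜 • a),
      c • a⟫_𝕜 = 0 := by
    rw [inner_smul_right]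
    have : ⟪y - ((orthogonalProjection W' y : EuclideanSpace 𝕜 (Fin d)) + ⟪a, y⟫_𝕜 • a), a⟫_𝕜
        = 0 := by
      have hya : ⟪y, a⟫_𝕜 - (⟪(orthogonalProjection W' y : EuclideanSpace 𝕜 (Fin d)), a⟫_𝕜
          + ⟪(⟪a, y⟫_𝕜 • a), a⟫_𝕜) = 0 := by
        have e1 : ⟪(orthogonalProjection W' y : EuclideanSpace 𝕜 (Fin d)), a⟫_𝕜 = 0 := by
          rw [← inner_conj_symm, haπ]; simp
        rw [e1, inner_smul_left, ha, mul_one, ← inner_conj_symm a y]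
        simp
      simpa [inner_sub_left, inner_add_left] using hya
    rw [this, mul_zero]
  rw [inner_add_right, h2, add_zero, inner_sub_left, inner_add_left, h1, add_zero]
  rw [inner_sub_left] at hπ
  exact hπ

lemma finrank_sup_span {W' : Submodule 𝕜 (EuclideanSpace 𝕜 (Fin d))} {a : EuclideanSpace 𝕜 (Fin d)}
    (ha : a ≠ 0) (horth : ∀ z ∈ W', ⟪a, z⟫_𝕜 = 0) :
    Module.finrank 𝕜 ↥(W' ⊔ (𝕜 ∙ a)) = Module.finrank 𝕜 W' + 1 := by
  have hinf : W' ⊓ (𝕜 ∙ a) = ⊥ := by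
    rw [Submodule.eq_bot_iff]
    rintro z ⟨hz1, hz2⟩
    rcases Submodule.mem_span_singleton.1 hz2 with ⟨c, rfl⟩
    have h := horth _ hz1
    rw [inner_smul_right, inner_self_eq_norm_sq_to_K] at h
    rcases mul_eq_zero.1 h with h | h
    · rw [h, zero_smul]
    · exfalso
      apply ha
      have h2 : (‖a‖ : 𝕜) = 0 := pow_eq_zero_iff (n := 2) (by norm_num) |>.1 h
      simpa using h2
  have h := Submodule.finrank_sup_add_finrank_inf_eq W' (𝕜 ∙ a)
  rw [hinf, finrank_span_singleton ha] at h
  simpa using h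

lemma finrank_iSup_orthogonal {K : ℕ} (W : Fin K → Submodule 𝕜 (EuclideanSpace 𝕜 (Fin d)))
    (h : ∀ j k, j ≠ k → W j ≤ (W k)ᗮ) :
    Module.finrank 𝕜 ↥(⨆ k, W k) = ∑ k, Module.finrank 𝕜 (W k) := by
  have key : ∀ s : Finset (Fin K),
      Module.finrank 𝕜 ↥(s.sup W) = ∑ k ∈ s, Module.finrank 𝕜 (W k) := by
    intro s
    induction s using Finset.induction_on with
    | empty => simp
    | @insert k s hk ih =>
      have horth : s.sup W ≤ (W k)ᗮ := by
        apply Finset.sup_le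
        intro j hj
        exact h j k (by rintro rfl; exact hk hj)
      have hinf : W k ⊓ s.sup W = ⊥ := by
        rw [Submodule.eq_bot_iff]
        rintro z ⟨hz1, hz2⟩
        have hzz : z ∈ W k ⊓ (W k)ᗮ := ⟨hz1, horth hz2⟩
        rw [Submodule.inf_orthogonal_eq_bot] at hzz
        exact hzz
      have h2 := Submodule.finrank_sup_add_finrank_inf_eq (W k) (s.sup W)
      rw [hinf] at h2
      rw [Finset.sup_insert, Finset.sum_insert hk, ← ih]
      simpa using h2
  have huniv : (⨆ k, W k) = Finset.univ.sup W := by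
    rw [Finset.sup_eq_iSup]; simp
  rw [huniv, key]

lemma frobSq_zero : frobSq (0 : EuclideanSpace 𝕜 (Fin d) →ₗ[𝕜] EuclideanSpace 𝕜 (Fin d)) = 0 := by
  simp [frobSq]

lemma inner_projL_self (W : Submodule 𝕜 (EuclideanSpace 𝕜 (Fin d)))
    (y : EuclideanSpace 𝕜 (Fin d)) :
    ⟪y, projL W y⟫_𝕜 = ((‖projL W y‖ : 𝕜)) ^ 2 := by
  have h0 : ⟪y - projL W y, projL W y⟫_𝕜 = 0 := inner_sub_projL W y (projL_mem W y)
  rw [inner_sub_left, sub_eq_zero] at h0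
  rw [h0, inner_self_eq_norm_sq_to_K]

end Aux

section Main
open scoped InnerProductSpace
open Module Submodule

set_option maxHeartbeats 1000000

/-- if `W ∈ S_K(L)` with `L_k ≥ 1`, `d ≤ Σ L_k`, is a local
minimizer of `FFP_w` with `(W, w) ∈ ℰ`, then `(W, w)` is a fusion frame, i.e.
the subspaces span `𝔽^d`. -/
theorem stmt14 {𝕜 : Type*} [RCLike 𝕜] {d K : ℕ} (hd : 0 < d)
    (L : Fin K → ℕ) (hL : ∀ k, 1 ≤ L k) (hdL : d ≤ ∑ k, L k)
    (w : Fin K → ℝ) (hw : ∀ k, 0 < w k)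
    (W : Fin K → Submodule 𝕜 (EuclideanSpace 𝕜 (Fin d)))
    (hmin : IsLocalMinFFP w L W) (hmemE : MemE w W) :
    (⨆ k, W k) = ⊤ := by
  by_contra hne
  obtain ⟨hdim, ε, hε, hloc⟩ := hmin
  -- a unit vector in the orthogonal complement
  have hcne : (⨆ k, W k)ᗮ ≠ ⊥ := fun h0 => hne (Submodule.orthogonal_eq_bot_iff.1 h0)
  obtain ⟨x, hxmem, hxx⟩ : ∃ x, x ∈ (⨆ k, W k)ᗮ ∧ ⟪x, x⟫_𝕜 = 1 := by
    obtain ⟨x0, hx0mem, hx0ne⟩ := Submodule.exists_mem_ne_zero_of_ne_bot hcne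
    refine ⟨((‖x0‖ : 𝕜))⁻¹ • x0, Submodule.smul_mem _ _ hx0mem, ?_⟩
    rw [inner_self_eq_norm_sq_to_K, norm_smul_inv_norm hx0ne]
    norm_num
  clear hcne
  have hxW : ∀ i, ∀ z ∈ W i, ⟪z, x⟫_𝕜 = 0 := by
    intro i z hz
    exact (Submodule.mem_orthogonal _ _).1 hxmem z (le_iSup W i hz)
  have hxW' : ∀ i, ∀ z ∈ W i, ⟪x, z⟫_𝕜 = 0 := by
    intro i z hz
    rw [← inner_conj_symm]
    simp [hxW i z hz]
  by_cases hortho : ∀ j k, j ≠ k → W j ≤ (W k)ᗮ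
  · -- pairwise orthogonal: dimension count gives ⊤
    apply hne
    apply Submodule.eq_top_of_finrank_eq
    have h1 : Module.finrank 𝕜 ↥(⨆ k, W k) = ∑ k, L k := by
      rw [finrank_iSup_orthogonal W hortho]
      exact Finset.sum_congr rfl fun k _ => hdim k
    have h2 : Module.finrank 𝕜 ↥(⨆ k, W k) ≤ d := by
      simpa [finrank_euclideanSpace_fin] using Submodule.finrank_le (⨆ k, W k)
    rw [finrank_euclideanSpace_fin]
    omega
  · push_neg at hortho
    obtain ⟨j, k, hjk, hnle⟩ := hortho
    -- u₀ ∈ W j not orthogonal to W k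
    obtain ⟨u₀, hu₀mem, hu₀no⟩ : ∃ y ∈ W j, y ∉ (W k)ᗮ := by
      by_contra hcon
      push_neg at hcon
      exact hnle hcon
    clear hnle
    obtain ⟨z, hzmem, hzu₀⟩ : ∃ z ∈ W k, ⟪z, u₀⟫_𝕜 ≠ 0 := by
      by_contra hcon
      push_neg at hcon
      exact hu₀no ((Submodule.mem_orthogonal _ _).2 hcon)
    clear hu₀no
    have hu₀ne : u₀ ≠ 0 := by rintro rfl; exact hzu₀ (inner_zero_right z)
    -- the eigenvalue at j
    obtain ⟨μ, -, hμ⟩ := hmemE j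
    set S := fusionOp w W with hSdef
    have hSu : ∀ y ∈ W j, S y = (μ : 𝕜) • y := by
      intro y hy
      have := LinearMap.ext_iff.1 hμ y
      simpa [projL_of_mem hy] using this
    clear hμ
    have hSx : S x = 0 := by
      rw [hSdef, fusionOp, LinearMap.sum_apply]
      apply Finset.sum_eq_zero
      intro i _
      have : x ∈ (W i)ᗮ := (Submodule.mem_orthogonal _ _).2 fun z hz => hxW i z hz
      simp [projL_of_orthogonal this]
    -- μ > (w j)^2
    have hπk : projL (W k) u₀ ≠ 0 := by
      intro h0
      apply hzu₀
      have h1 : ⟪z, u₀ - projL (W k) u₀⟫_𝕜 = 0 := by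
        rw [← inner_conj_symm, inner_sub_projL (W k) u₀ hzmem, map_zero]
      rwa [inner_sub_right, h0, inner_zero_right, sub_zero] at h1
    have hμgt : (w j) ^ 2 < μ := by
      have hA : RCLike.re ⟪u₀, S u₀⟫_𝕜 = μ * ‖u₀‖ ^ 2 := by
        rw [hSu u₀ hu₀mem, inner_smul_right, inner_self_eq_norm_sq_to_K,
          show (μ : 𝕜) * (‖u₀‖ : 𝕜) ^ 2 = ((μ * ‖u₀‖ ^ 2 : ℝ) : 𝕜) by push_cast; ring,
          RCLike.ofReal_re]
      have hB : RCLike.re ⟪u₀, S u₀⟫_𝕜 = ∑ i, (w i) ^ 2 * ‖projL (W i) u₀‖ ^ 2 := by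
        rw [hSdef, fusionOp, LinearMap.sum_apply, inner_sum, map_sum]
        refine Finset.sum_congr rfl fun i _ => ?_
        rw [LinearMap.smul_apply, inner_smul_right, inner_projL_self,
          show ((w i : 𝕜)) ^ 2 * ((‖projL (W i) u₀‖ : 𝕜)) ^ 2
            = (((w i) ^ 2 * ‖projL (W i) u₀‖ ^ 2 : ℝ) : 𝕜) by push_cast; ring,
          RCLike.ofReal_re]
      have hterms : (w j) ^ 2 * ‖u₀‖ ^ 2 + (w k) ^ 2 * ‖projL (W k) u₀‖ ^ 2
          ≤ ∑ i, (w i) ^ 2 * ‖projL (W i) u₀‖ ^ 2 := by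
        have hjj : (w j) ^ 2 * ‖projL (W j) u₀‖ ^ 2 = (w j) ^ 2 * ‖u₀‖ ^ 2 := by
          rw [projL_of_mem hu₀mem]
        calc (w j) ^ 2 * ‖u₀‖ ^ 2 + (w k) ^ 2 * ‖projL (W k) u₀‖ ^ 2
            = ∑ i ∈ ({j, k} : Finset (Fin K)), (w i) ^ 2 * ‖projL (W i) u₀‖ ^ 2 := by
              rw [Finset.sum_pair hjk, hjj]
          _ ≤ _ := Finset.sum_le_sum_of_subset_of_nonneg (Finset.subset_univ _)
              (fun i _ _ => by positivity)
      have hpos : 0 < (w k) ^ 2 * ‖projL (W k) u₀‖ ^ 2 := by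
        have h1 : 0 < ‖projL (W k) u₀‖ := norm_pos_iff.2 hπk
        have h2 : 0 < w k := hw k
        positivity
      have hn₀ : 0 < ‖u₀‖ ^ 2 := by
        have : 0 < ‖u₀‖ := norm_pos_iff.2 hu₀ne
        positivity
      nlinarith [hA, hB, hterms, hpos, hn₀]
    -- unit vector u and the rotated vector v
    obtain ⟨u, humem, huu⟩ : ∃ u, u ∈ W j ∧ ⟪u, u⟫_𝕜 = 1 := by
      refine ⟨((‖u₀‖ : 𝕜))⁻¹ • u₀, Submodule.smul_mem _ _ hu₀mem, ?_⟩
      rw [inner_self_eq_norm_sq_to_K, norm_smul_inv_norm hu₀ne]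
      norm_num
    clear hzu₀ hzmem hπk hu₀ne hu₀mem
    have hune : u ≠ 0 := by
      intro h
      rw [h, inner_zero_left] at huu
      exact zero_ne_one huu
    set si : ℝ := min (ε / 2) (1 / 2) with hsidef
    have hsipos : 0 < si := lt_min (by linarith) (by norm_num)
    have hsile : si ≤ 1 / 2 := min_le_right _ _
    have hsile2 : si ≤ ε / 2 := min_le_left _ _
    have hsisq : si ^ 2 ≤ 1 / 4 := by
      have := pow_le_pow_left₀ (le_of_lt hsipos) hsile 2
      linarith [this]
    set co : ℝ := Real.sqrt (1 - si ^ 2) with hcodef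
    have hco2 : co ^ 2 = 1 - si ^ 2 := Real.sq_sqrt (by linarith)
    obtain ⟨v, hvdef⟩ : ∃ v : EuclideanSpace 𝕜 (Fin d),
        v = (co : 𝕜) • u + (si : 𝕜) • x := ⟨_, rfl⟩
    have hxu : ⟪x, u⟫_𝕜 = 0 := hxW' j u humem
    have hux : ⟪u, x⟫_𝕜 = 0 := hxW j u humem
    have hvu : ⟪v, u⟫_𝕜 = (co : 𝕜) := by
      rw [hvdef, inner_add_left, inner_smul_left, inner_smul_left, huu, hxu,
        RCLike.conj_ofReal, RCLike.conj_ofReal, mul_one, mul_zero, add_zero]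
    have huv : ⟪u, v⟫_𝕜 = (co : 𝕜) := by
      rw [hvdef, inner_add_right, inner_smul_right, inner_smul_right, huu, hux,
        mul_one, mul_zero, add_zero]
    have hxv : ⟪x, v⟫_𝕜 = (si : 𝕜) := by
      rw [hvdef, inner_add_right, inner_smul_right, inner_smul_right, hxx, hxu,
        mul_one, mul_zero, zero_add]
    have hvv : ⟪v, v⟫_𝕜 = 1 := by
      rw [hvdef, inner_add_left, inner_smul_left, inner_smul_left, RCLike.conj_ofReal,
        RCLike.conj_ofReal, ← hvdef, huv, hxv,
        show (co : 𝕜) * co + (si : 𝕜) * si = ((co ^ 2 + si ^ 2 : ℝ) : 𝕜) by push_cast; ring,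
        show co ^ 2 + si ^ 2 = 1 by linarith]
      simp
    have hvne : v ≠ 0 := by
      intro h
      rw [h, inner_zero_left] at hvv
      exact zero_ne_one hvv
    -- the subspaces
    set W' : Submodule 𝕜 (EuclideanSpace 𝕜 (Fin d)) := W j ⊓ (𝕜 ∙ u)ᗮ with hW'def
    have hW'le : W' ≤ W j := inf_le_left
    have huW' : ∀ z ∈ W', ⟪u, z⟫_𝕜 = 0 := fun z hz =>
      (Submodule.mem_orthogonal _ _).1 hz.2 u (Submodule.mem_span_singleton_self u)
    have hvW' : ∀ z ∈ W', ⟪v, z⟫_𝕜 = 0 := by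
      intro z hz
      rw [hvdef, inner_add_left, inner_smul_left, inner_smul_left, huW' z hz,
        hxW' j z (hW'le hz), mul_zero, mul_zero, add_zero]
    have hdecomp : W j = W' ⊔ (𝕜 ∙ u) := by
      apply le_antisymm
      · intro y hy
        have hmem1 : y - ⟪u, y⟫_𝕜 • u ∈ W' := by
          refine Submodule.mem_inf.2 ⟨Submodule.sub_mem _ hy (Submodule.smul_mem _ _ humem), ?_⟩
          rw [Submodule.mem_orthogonal]
          intro q hq
          rcases Submodule.mem_span_singleton.1 hq with ⟨c, rfl⟩
          rw [inner_smul_left, inner_sub_right, inner_smul_right, huu, mul_one, sub_self,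
            mul_zero]
        have hysum : y = (y - ⟪u, y⟫_𝕜 • u) + ⟪u, y⟫_𝕜 • u := by abel
        rw [hysum]
        exact Submodule.add_mem_sup hmem1
          (Submodule.smul_mem _ _ (Submodule.mem_span_singleton_self u))
      · exact sup_le hW'le ((Submodule.span_singleton_le_iff_mem _ _).2 humem)
    have hprojWj : projL (W j) = projL W' + rk1 u := by
      rw [hdecomp]; exact projL_sup_span huu huW'
    set Vj : Submodule 𝕜 (EuclideanSpace 𝕜 (Fin d)) := W' ⊔ (𝕜 ∙ v) with hVjdef
    have hprojVj : projL Vj = projL W' + rk1 v := projL_sup_span hvv hvW'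
    have hdimVj : Module.finrank 𝕜 Vj = L j := by
      rw [hVjdef, finrank_sup_span hvne hvW']
      have h1 : Module.finrank 𝕜 ↥(W' ⊔ (𝕜 ∙ u)) = Module.finrank 𝕜 W' + 1 :=
        finrank_sup_span hune huW'
      rw [← hdecomp, hdim j] at h1
      omega
    set V := Function.update W j Vj with hVdef
    have hdimV : ∀ i, Module.finrank 𝕜 (V i) = L i := by
      intro i
      by_cases h : i = j
      · subst h; rw [hVdef, Function.update_self]; exact hdimVj
      · rw [hVdef, Function.update_of_ne h]; exact hdim i
    -- fusion operator of the perturbed family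
    set D : EuclideanSpace 𝕜 (Fin d) →ₗ[𝕜] EuclideanSpace 𝕜 (Fin d) := rk1 v - rk1 u with hDdef
    have hprojdiff : projL Vj = projL (W j) + D := by
      rw [hprojVj, hprojWj, hDdef]; abel
    have hSV : fusionOp w V = S + ((w j : 𝕜)) ^ 2 • D := by
      have hfun : (fun i => ((w i : 𝕜)) ^ 2 • projL (V i))
          = Function.update (fun i => ((w i : 𝕜)) ^ 2 • projL (W i)) j
              (((w j : 𝕜)) ^ 2 • projL Vj) := by
        funext i
        by_cases h : i = j
        · subst h; rw [hVdef, Function.update_self, Function.update_self]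
        · rw [hVdef, Function.update_of_ne h, Function.update_of_ne h]
      rw [hSdef, fusionOp, fusionOp, hfun, Finset.sum_update_of_mem (Finset.mem_univ j),
        Finset.sdiff_singleton_eq_erase, ← Finset.add_sum_erase _ _ (Finset.mem_univ j),
        hprojdiff, smul_add]
      abel
    -- trace identities
    have hSv : S v = ((co * μ : ℝ) : 𝕜) • u := by
      rw [hvdef, map_add, map_smul, map_smul, hSu u humem, hSx, smul_zero, add_zero, smul_smul]
      congr 1
      push_cast; ring
    have hvSv : ⟪v, S v⟫_𝕜 = ((μ * co ^ 2 : ℝ) : 𝕜) := by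
      rw [hSv, inner_smul_right, hvu]
      push_cast; ring
    have huSu : ⟪u, S u⟫_𝕜 = ((μ : ℝ) : 𝕜) := by
      rw [hSu u humem, inner_smul_right, huu, mul_one]
    have hcoK : ((co : 𝕜)) * (co : 𝕜) = ((1 - si ^ 2 : ℝ) : 𝕜) := by
      rw [show ((co : 𝕜)) * co = ((co * co : ℝ) : 𝕜) by push_cast; ring]
      norm_cast
      linarith [hco2, sq co]
    have htSD : LinearMap.trace 𝕜 _ (S ∘ₗ D) = ((-(μ * si ^ 2) : ℝ) : 𝕜) := by
      rw [hDdef, LinearMap.comp_sub, map_sub, trace_comp_rk1, trace_comp_rk1, hvSv, huSu,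
        show (-(μ * si ^ 2) : ℝ) = μ * co ^ 2 - μ by rw [hco2]; ring]
      push_cast; ring
    have htDS : LinearMap.trace 𝕜 _ (D ∘ₗ S) = ((-(μ * si ^ 2) : ℝ) : 𝕜) := by
      rw [LinearMap.trace_comp_comm']; exact htSD
    have htDD : LinearMap.trace 𝕜 _ (D ∘ₗ D) = ((2 * si ^ 2 : ℝ) : 𝕜) := by
      rw [hDdef, LinearMap.sub_comp, LinearMap.comp_sub, LinearMap.comp_sub, map_sub, map_sub,
        map_sub, trace_rk1_comp_rk1, trace_rk1_comp_rk1, trace_rk1_comp_rk1, trace_rk1_comp_rk1,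
        hvv, huu, huv, hvu,
        show ((2 * si ^ 2 : ℝ) : 𝕜) = 2 - 2 * (((1 - si ^ 2 : ℝ)) : 𝕜) by push_cast; ring,
        ← hcoK]
      ring
    set Δ : ℝ := 2 * (w j) ^ 2 * (-(μ * si ^ 2)) + ((w j) ^ 2 * (w j) ^ 2) * (2 * si ^ 2)
      with hΔdef
    have hFFPV : FFP w V = FFP w W + Δ := by
      rw [FFP, FFP, hSV, ← hSdef]
      have hexp : (S + ((w j : 𝕜)) ^ 2 • D) ∘ₗ (S + ((w j : 𝕜)) ^ 2 • D)
          = S ∘ₗ S + (((w j : 𝕜)) ^ 2 • (S ∘ₗ D) + (((w j : 𝕜)) ^ 2 • (D ∘ₗ S)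
            + (((w j : 𝕜)) ^ 2 * ((w j : 𝕜)) ^ 2) • (D ∘ₗ D))) := by
        rw [LinearMap.add_comp, LinearMap.comp_add, LinearMap.comp_add, LinearMap.smul_comp,
          LinearMap.comp_smul, LinearMap.smul_comp, LinearMap.comp_smul, smul_smul]
        abel
      have htot : (LinearMap.trace 𝕜 (EuclideanSpace 𝕜 (Fin d)))
          ((S + ((w j : 𝕜)) ^ 2 • D) ∘ₗ (S + ((w j : 𝕜)) ^ 2 • D))
          = LinearMap.trace 𝕜 _ (S ∘ₗ S) + ((Δ : ℝ) : 𝕜) := by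
        rw [hexp]
        simp only [map_add, map_smul, htSD, htDS, htDD, smul_eq_mul]
        rw [hΔdef]
        push_cast; ring
      rw [htot, map_add, RCLike.ofReal_re]
    have hΔneg : Δ < 0 := by
      rw [hΔdef]
      have h1 : 0 < (w j) ^ 2 := pow_pos (hw j) 2
      have h2 : 0 < si ^ 2 := pow_pos hsipos 2
      nlinarith [mul_pos (mul_pos h1 h2) (show (0 : ℝ) < μ - (w j) ^ 2 by linarith)]
    -- Frobenius distance
    have hfrob : ∑ i, frobSq (projL (W i) - projL (V i)) = 2 * si ^ 2 := by
      rw [Finset.sum_eq_single_of_mem j (Finset.mem_univ j)]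
      · have hdiff : projL (W j) - projL Vj = rk1 u - rk1 v := by
          rw [hprojWj, hprojVj]; abel
        rw [hVdef, Function.update_self, hdiff, frobSq]
        have hadj : LinearMap.adjoint (rk1 u - rk1 v) = rk1 u - rk1 v := by
          rw [map_sub, rk1_adjoint, rk1_adjoint]
        rw [hadj]
        have htr : LinearMap.trace 𝕜 _ ((rk1 u - rk1 v) ∘ₗ (rk1 u - rk1 v))
            = ((2 * si ^ 2 : ℝ) : 𝕜) := by
          rw [LinearMap.sub_comp, LinearMap.comp_sub, LinearMap.comp_sub, map_sub, map_sub,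
            map_sub, trace_rk1_comp_rk1, trace_rk1_comp_rk1, trace_rk1_comp_rk1,
            trace_rk1_comp_rk1, hvv, huu, huv, hvu,
            show ((2 * si ^ 2 : ℝ) : 𝕜) = 2 - 2 * (((1 - si ^ 2 : ℝ)) : 𝕜) by push_cast; ring,
            ← hcoK]
          ring
        rw [htr, RCLike.ofReal_re]
      · intro i _ hij
        rw [hVdef, Function.update_of_ne hij, sub_self, frobSq_zero]
    have hlt : ∑ i, frobSq (projL (W i) - projL (V i)) < ε ^ 2 := by
      rw [hfrob]
      nlinarith [hsipos, hsile2, hε]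
    have hge := hloc V hdimV hlt
    linarith

end Main
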